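/- If a tree T has an edge-partition E₁, …, E_k such that for each i ∈ [k] every connected component of T − E_i has at most c vertices, then T has a consistent (k+1 : k)-colouring with clustering c. -/

import Mathlib

open SimpleGraph

/-- The strong product of two simple graphs. -/
def strongProd {α β : Type*} (G : SimpleGraph α) (H : SimpleGraph β) :
    SimpleGraph (α × β) where
  Adj x y := x ≠ y ∧ (x.1 = y.1 ∨ G.Adj x.1 y.1) ∧ (x.2 = y.2 ∨ H.Adj x.2 y.2)
  symm.symm x y := by
    rintro ⟨h1, h2, h3⟩
    exact ⟨h1.symm, h2.imp Eq.symm (fun h => G.adj_symm h), h3.imp Eq.symm (fun h => H.adj_symm h)⟩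
  loopless.irrefl x := by simp

/-- The strong product of a family of simple graphs. -/
def strongProdPi {d : ℕ} {V : Fin d → Type*} (G : ∀ i, SimpleGraph (V i)) :
    SimpleGraph (∀ i, V i) where
  Adj x y := x ≠ y ∧ ∀ i, x i = y i ∨ (G i).Adj (x i) (y i)
  symm.symm x y := fun ⟨h1, h2⟩ => ⟨h1.symm, fun i => (h2 i).imp Eq.symm (fun h => (G i).adj_symm h)⟩
  loopless.irrefl x := by simp

/-- Every connected component of the subgraph of `G` induced on `S` has at most `c`
vertices. -/
def ClusterBound {α : Type*} (G : SimpleGraph α) (S : Set α) (c : ℕ) : Prop :=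
  ∀ v : S, ((G.induce S).connectedComponentMk v).supp.ncard ≤ c

/-- `G` has a `k`-colouring with clustering `c`. -/
def HasClusteredColoring {α : Type*} (G : SimpleGraph α) (k c : ℕ) : Prop :=
  ∃ f : α → Fin k, ∀ i : Fin k, ClusterBound G {v | f v = i} c

/-- `f` is a `(p:q)`-colouring: each vertex gets a `q`-element subset of `Fin p`. -/
def IsPQColoring {α : Type*} (p q : ℕ) (f : α → Finset (Fin p)) : Prop :=
  ∀ v, (f v).card = q

/-- `f` is a proper `(p:q)`-colouring of `G`. -/
def IsProperPQColoring {α : Type*} (G : SimpleGraph α) (p q : ℕ)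
    (f : α → Finset (Fin p)) : Prop :=
  IsPQColoring p q f ∧ ∀ ⦃x y⦄, G.Adj x y → Disjoint (f x) (f y)

/-- The set-colouring `f` has clustering `c`: for each colour, each monochromatic
component has at most `c` vertices. -/
def PQClusterBound {α : Type*} (G : SimpleGraph α) {p : ℕ}
    (f : α → Finset (Fin p)) (c : ℕ) : Prop :=
  ∀ i : Fin p, ClusterBound G {v | i ∈ f v} c

/-- `G` has a `(p:q)`-colouring with clustering `c`. -/
def HasPQClusteredColoring {α : Type*} (G : SimpleGraph α) (p q c : ℕ) : Prop :=
  ∃ f : α → Finset (Fin p), IsPQColoring p q f ∧ PQClusterBound G f c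

/-- `ord` is a consistent `(p:q)`-colouring of `G` (each vertex's `q` colours are ordered,
with the `i`-th colour of `x` different from the `j`-th colour of `y` for every edge `xy`
and all distinct `i, j`). -/
def IsConsistentPQColoring {α : Type*} (G : SimpleGraph α) (p q : ℕ)
    (ord : α → Fin q → Fin p) : Prop :=
  (∀ v, Function.Injective (ord v)) ∧
    ∀ ⦃x y⦄, G.Adj x y → ∀ i j : Fin q, i ≠ j → ord x i ≠ ord y j

/-- The colour set of a vertex in an ordered colouring. -/
def ordColors {α : Type*} {p q : ℕ} (ord : α → Fin q → Fin p) (v : α) : Finset (Fin p) :=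
  Finset.image (ord v) Finset.univ

/-- `G` has a consistent `(p:q)`-colouring with clustering `c`. -/
def HasConsistentClusteredColoring {α : Type*} (G : SimpleGraph α) (p q c : ℕ) : Prop :=
  ∃ ord : α → Fin q → Fin p, IsConsistentPQColoring G p q ord ∧
    PQClusterBound G (ordColors ord) c

/-- The fractional chromatic number of `G`: the infimum of `p/q` over proper
`(p:q)`-colourings of `G`. -/
noncomputable def fracChrom {α : Type*} (G : SimpleGraph α) : ℝ :=
  sInf {t : ℝ | ∃ p q : ℕ, 0 < q ∧
    (∃ f : α → Finset (Fin p), IsProperPQColoring G p q f) ∧ t = (p : ℝ) / q}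

/-- The independence number of `G`. -/
noncomputable def indepNum {α : Type*} (G : SimpleGraph α) : ℕ :=
  sSup {n | ∃ s : Finset α, (∀ x ∈ s, ∀ y ∈ s, ¬ G.Adj x y) ∧ s.card = n}


section AuxCCC

open Function SimpleGraph

/-- A colour not in the range of `f`. -/
noncomputable def missingCol {k : ℕ} (f : Fin k → Fin (k + 1)) : Fin (k + 1) :=
  if h : ∃ a, ∀ i, f i ≠ a then h.choose else 0

lemma missingCol_spec {k : ℕ} {f : Fin k → Fin (k + 1)} (hf : Function.Injective f) :
    ∀ i, f i ≠ missingCol f := by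
  have h : ∃ a, ∀ i, f i ≠ a := by
    by_contra hc
    push_neg at hc
    have hs : Function.Surjective f := fun a => hc a
    have := Fintype.card_le_of_surjective f hs
    simp only [Fintype.card_fin] at this
    omega
  rw [missingCol, dif_pos h]
  exact h.choose_spec

lemma update_missing_injective {k : ℕ} {f : Fin k → Fin (k + 1)}
    (hf : Function.Injective f) (e : Fin k) :
    Function.Injective (Function.update f e (missingCol f)) := by
  intro i j hij
  rcases eq_or_ne i e with rfl | hi
  · rcases eq_or_ne j i with rfl | hj
    · rfl
    · rw [Function.update_self, Function.update_of_ne hj] at hij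
      exact absurd hij.symm (missingCol_spec hf j)
  · rcases eq_or_ne j e with rfl | hj
    · rw [Function.update_of_ne hi, Function.update_self] at hij
      exact absurd hij (missingCol_spec hf i)
    · rw [Function.update_of_ne hi, Function.update_of_ne hj] at hij
      exact hf hij

lemma ne_update_missing {k : ℕ} {f : Fin k → Fin (k + 1)}
    (hf : Function.Injective f) (e : Fin k) {i j : Fin k} (hij : i ≠ j) :
    f i ≠ Function.update f e (missingCol f) j := by
  rcases eq_or_ne j e with rfl | hj
  · rw [Function.update_self]
    exact missingCol_spec hf i
  · rw [Function.update_of_ne hj]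
    exact fun h => hij (hf h)

lemma keyA {k : ℕ} {f g : Fin k → Fin (k + 1)} (hg : Function.Injective g) {e : Fin k}
    (hrel : f = Function.update g e (missingCol g)) {i : Fin k} {a : Fin (k + 1)}
    (ha : f i = a) (ha' : ∃ j, g j = a) : g i = a ∧ i ≠ e := by
  obtain ⟨j, hj⟩ := ha'
  have hie : i ≠ e := by
    rintro rfl
    rw [hrel, Function.update_self] at ha
    exact missingCol_spec hg j (hj.trans ha.symm)
  rw [hrel, Function.update_of_ne hie] at ha
  exact ⟨ha, hie⟩

lemma keyB {k : ℕ} {f g : Fin k → Fin (k + 1)} (hg : Function.Injective g) {e : Fin k}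
    (hrel : f = Function.update g e (missingCol g)) {i : Fin k} {a : Fin (k + 1)}
    (ha : g i = a) (ha' : ∃ j, f j = a) : f i = a ∧ i ≠ e := by
  obtain ⟨j, hj⟩ := ha'
  have hje : j ≠ e := by
    rintro rfl
    rw [hrel, Function.update_self] at hj
    exact missingCol_spec hg i (ha.trans hj.symm)
  rw [hrel, Function.update_of_ne hje] at hj
  have hji : j = i := hg (hj.trans ha.symm)
  subst hji
  rw [hrel, Function.update_of_ne hje]
  exact ⟨hj, hje⟩

/-- Generic recursion along a parent function with decreasing depth. -/
noncomputable def buildRec {α β : Type*} (d : α → ℕ) (p : α → α)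
    (hp : ∀ v, d v ≠ 0 → d (p v) < d v) (f₀ : β) (g : α → β → β) (v : α) : β :=
  if h : d v = 0 then f₀ else g v (buildRec d p hp f₀ g (p v))
termination_by d v
decreasing_by exact hp v h

variable {V : Type*} {G : SimpleGraph V}

lemma dist_lt_of_mem_support_shortest [DecidableEq V] {r x y : V} {w : G.Walk r x}
    (hw : w.length = G.dist r x) (hy : y ∈ w.support) (hyx : y ≠ x) :
    G.dist r y < G.dist r x := by
  have hspec := w.take_spec hy
  have hlen := congrArg SimpleGraph.Walk.length hspec
  rw [SimpleGraph.Walk.length_append] at hlen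
  have h1 : G.dist r y ≤ (w.takeUntil y hy).length := SimpleGraph.dist_le _
  have h2 : (w.dropUntil y hy).length ≠ 0 :=
    fun h0 => hyx (SimpleGraph.Walk.eq_of_length_eq_zero h0)
  omega

lemma isPath_concat' {r x y : V} {w : G.Walk r x} (hw : w.IsPath) (h : G.Adj x y)
    (hy : y ∉ w.support) : (w.concat h).IsPath := by
  rw [← SimpleGraph.Walk.isPath_reverse_iff, SimpleGraph.Walk.reverse_concat,
    SimpleGraph.Walk.cons_isPath_iff]
  exact ⟨hw.reverse, by rwa [SimpleGraph.Walk.support_reverse, List.mem_reverse]⟩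

lemma exists_parent' (hc : G.Connected) {r v : V} (hv : v ≠ r) :
    ∃ u, G.Adj u v ∧ G.dist r u + 1 = G.dist r v := by
  obtain ⟨w, hwp, hwl⟩ := (hc r v).exists_path_of_dist
  obtain ⟨u, hadj, q, hq⟩ := SimpleGraph.Walk.exists_eq_cons_of_ne hv w.reverse
  have hlen : w.length = q.length + 1 := by
    have := congrArg SimpleGraph.Walk.length hq
    simpa using this
  have h1 : G.dist r u ≤ q.length := by
    have := SimpleGraph.dist_le q.reverse
    simpa using this
  have h2 : G.dist r v ≤ G.dist r u + 1 := by
    have ht := hc.dist_triangle (u := r) (v := u) (w := v)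
    have hd1 : G.dist u v = 1 := SimpleGraph.dist_eq_one_iff_adj.mpr hadj.symm
    omega
  exact ⟨u, hadj.symm, by omega⟩

lemma adj_dist_ne' [DecidableEq V] (hT : G.IsTree) (r : V) {x y : V} (h : G.Adj x y) :
    G.dist r x ≠ G.dist r y := by
  intro heq
  obtain ⟨wx, hxp, hxl⟩ := (hT.isConnected r x).exists_path_of_dist
  obtain ⟨wy, hyp, hyl⟩ := (hT.isConnected r y).exists_path_of_dist
  have hy : y ∉ wx.support := by
    intro hy
    have := dist_lt_of_mem_support_shortest hxl hy h.ne'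
    omega
  have hp2 : (wx.concat h).IsPath := isPath_concat' hxp h hy
  have huniq := hT.IsAcyclic.path_unique ⟨wx.concat h, hp2⟩ ⟨wy, hyp⟩
  have hlen := congrArg (fun p : G.Path r y => p.val.length) huniq
  simp only [SimpleGraph.Walk.length_concat] at hlen
  omega

lemma parent_unique' [DecidableEq V] (hT : G.IsTree) (r : V) {x u y : V} (hx : G.Adj x y) (hu : G.Adj u y)
    (hdx : G.dist r x + 1 = G.dist r y) (hdu : G.dist r u + 1 = G.dist r y) : x = u := by
  obtain ⟨wx, hxp, hxl⟩ := (hT.isConnected r x).exists_path_of_dist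
  obtain ⟨wu, hup, hul⟩ := (hT.isConnected r u).exists_path_of_dist
  have hy1 : y ∉ wx.support := by
    intro hy
    rcases eq_or_ne y x with rfl | hne
    · exact (G.loopless.irrefl _ hx).elim
    · have := dist_lt_of_mem_support_shortest hxl hy hne
      omega
  have hy2 : y ∉ wu.support := by
    intro hy
    rcases eq_or_ne y u with rfl | hne
    · exact (G.loopless.irrefl _ hu).elim
    · have := dist_lt_of_mem_support_shortest hul hy hne
      omega
  have h1 : (wx.concat hx).IsPath := isPath_concat' hxp hx hy1
  have h2 : (wu.concat hu).IsPath := isPath_concat' hup hu hy2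
  have huniq := hT.IsAcyclic.path_unique ⟨wx.concat hx, h1⟩ ⟨wu.concat hu, h2⟩
  have heq : wx.concat hx = wu.concat hu := congrArg Subtype.val huniq
  obtain ⟨hv, -⟩ := SimpleGraph.Walk.concat_inj heq
  exact hv

end AuxCCC

theorem stmt11 {α : Type*} [Fintype α] (T : SimpleGraph α) (hT : T.IsTree)
    (k c : ℕ) (E : Fin k → Set (Sym2 α))
    (hcover : (⋃ i, E i) = T.edgeSet)
    (hdisj : ∀ i j : Fin k, i ≠ j → Disjoint (E i) (E j))
    (hcomp : ∀ i : Fin k, ClusterBound (T.deleteEdges (E i)) Set.univ c) :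
    HasConsistentClusteredColoring T (k + 1) k c := by
  classical
  rcases Nat.eq_zero_or_pos k with rfl | hk
  · refine ⟨fun _ => Fin.elim0, ⟨fun v i => i.elim0, fun x y _ i => i.elim0⟩, ?_⟩
    intro a v
    exact absurd v.2 (by simp [ordColors])
  · obtain ⟨r⟩ : Nonempty α := hT.isConnected.nonempty
    have hclsE : ∀ e ∈ T.edgeSet, ∃ i, e ∈ E i := by
      intro e he
      rw [← hcover] at he
      exact Set.mem_iUnion.mp he
    set cls : Sym2 α → Fin k :=
      fun e => if h : ∃ i, e ∈ E i then h.choose else ⟨0, hk⟩ with hclsdef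
    have hcls : ∀ e ∈ T.edgeSet, e ∈ E (cls e) := by
      intro e he
      have h := hclsE e he
      simp only [hclsdef, dif_pos h]
      exact h.choose_spec
    have hpar : ∀ v, v ≠ r → ∃ u, T.Adj u v ∧ T.dist r u + 1 = T.dist r v :=
      fun v hv => exists_parent' hT.isConnected hv
    set par : α → α := fun v => if h : v = r then r else (hpar v h).choose with hpardef
    have hpar1 : ∀ v, v ≠ r → T.Adj (par v) v ∧ T.dist r (par v) + 1 = T.dist r v := by
      intro v hv
      simp only [hpardef, dif_neg hv]
      exact (hpar v hv).choose_spec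
    set d : α → ℕ := fun v => T.dist r v with hddef
    have hd0 : ∀ v, d v ≠ 0 → v ≠ r := by
      rintro v hv rfl
      simp only [hddef] at hv
      exact hv SimpleGraph.dist_self
    have hdec : ∀ v, d v ≠ 0 → d (par v) < d v := by
      intro v hv
      have h1 := (hpar1 v (hd0 v hv)).2
      simp only [hddef]
      omega
    set ord : α → Fin k → Fin (k + 1) :=
      buildRec d par hdec Fin.castSucc
        (fun v f => Function.update f (cls s(par v, v)) (missingCol f)) with horddef
    have hord_root : ord r = Fin.castSucc := by
      rw [horddef, buildRec, dif_pos (by simp [hddef, SimpleGraph.dist_self])]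
    have hord_ne : ∀ v, v ≠ r →
        ord v = Function.update (ord (par v)) (cls s(par v, v)) (missingCol (ord (par v))) := by
      intro v hv
      have hdv : d v ≠ 0 := by
        have := hT.isConnected.pos_dist_of_ne (Ne.symm hv)
        simp only [hddef]
        omega
      conv_lhs => rw [horddef, buildRec]
      rw [dif_neg hdv]
    have hinjn : ∀ n v, d v = n → Function.Injective (ord v) := by
      intro n
      induction n using Nat.strong_induction_on with
      | _ n ih =>
        intro v hv
        by_cases hvr : v = r
        · subst hvr
          rw [hord_root]
          exact Fin.castSucc_injective k
        · rw [hord_ne v hvr]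
          have hlt : d (par v) < n := by
            have h1 := (hpar1 v hvr).2
            have h2 : d v ≠ 0 := by
              have := hT.isConnected.pos_dist_of_ne (Ne.symm hvr)
              simp only [hddef]
              omega
            simp only [hddef] at hv ⊢
            omega
          exact update_missing_injective (ih _ hlt _ rfl) _
    have hinj : ∀ v, Function.Injective (ord v) := fun v => hinjn (d v) v rfl
    have hrel : ∀ x y, T.Adj x y →
        ord y = Function.update (ord x) (cls s(x, y)) (missingCol (ord x)) ∨
        ord x = Function.update (ord y) (cls s(x, y)) (missingCol (ord y)) := by
      have hmain : ∀ x y, T.Adj x y → T.dist r x + 1 = T.dist r y →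
          ord y = Function.update (ord x) (cls s(x, y)) (missingCol (ord x)) := by
        intro x y hxy hdy
        have hyr : y ≠ r := by
          rintro rfl
          rw [SimpleGraph.dist_self] at hdy
          omega
        have hp := hpar1 y hyr
        have hpx : par y = x := parent_unique' hT r hp.1 hxy hp.2 hdy
        rw [hord_ne y hyr, hpx]
      intro x y hxy
      have hne := adj_dist_ne' hT r hxy
      have hd1 : T.dist x y = 1 := SimpleGraph.dist_eq_one_iff_adj.mpr hxy
      rcases lt_or_gt_of_ne hne with hlt | hgt
      · left
        refine hmain x y hxy ?_
        have ht := hT.isConnected.dist_triangle (u := r) (v := x) (w := y)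
        omega
      · right
        have hd2 : T.dist y x = 1 := SimpleGraph.dist_eq_one_iff_adj.mpr hxy.symm
        have hs : s(y, x) = s(x, y) := Sym2.eq_swap
        rw [← hs]
        refine hmain y x hxy.symm ?_
        have ht := hT.isConnected.dist_triangle (u := r) (v := y) (w := x)
        omega
    have hcons : ∀ ⦃x y⦄, T.Adj x y → ∀ i j : Fin k, i ≠ j → ord x i ≠ ord y j := by
      intro x y hxy i j hij
      rcases hrel x y hxy with h | h
      · rw [h]
        exact ne_update_missing (hinj x) _ hij
      · rw [h]
        exact (ne_update_missing (hinj y) _ hij.symm).symm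
    have hkey : ∀ x y, T.Adj x y → ∀ (i : Fin k) (a : Fin (k + 1)), ord x i = a →
        (∃ j, ord y j = a) → ord y i = a ∧ s(x, y) ∉ E i := by
      intro x y hxy i a hxa hya
      have hmem : s(x, y) ∈ T.edgeSet := hxy
      have hcl := hcls _ hmem
      rcases hrel x y hxy with h | h
      · obtain ⟨h1, h2⟩ := keyB (hinj x) h hxa hya
        exact ⟨h1, fun hmem' => (Set.disjoint_left.mp (hdisj _ _ (Ne.symm h2)) hcl) hmem'⟩
      · obtain ⟨h1, h2⟩ := keyA (hinj y) h hxa hya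
        exact ⟨h1, fun hmem' => (Set.disjoint_left.mp (hdisj _ _ (Ne.symm h2)) hcl) hmem'⟩
    refine ⟨ord, ⟨hinj, hcons⟩, ?_⟩
    intro a v
    have hSmem : ∀ w : α, w ∈ {w | a ∈ ordColors ord w} ↔ ∃ j, ord w j = a := by
      intro w
      simp [ordColors]
    obtain ⟨i, hi⟩ : ∃ i, ord (v : α) i = a := (hSmem v).mp v.2
    have hwalk : ∀ (x y : ↥{w | a ∈ ordColors ord w})
        (p : (T.induce {w | a ∈ ordColors ord w}).Walk x y), ord (x : α) i = a →
        ord (y : α) i = a ∧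
          ((T.deleteEdges (E i)).induce (Set.univ : Set α)).Reachable
            ⟨(x : α), Set.mem_univ _⟩ ⟨(y : α), Set.mem_univ _⟩ := by
      intro x y p
      induction p with
      | nil => exact fun h => ⟨h, Reachable.refl _⟩
      | @cons x u y hadj q ih =>
        intro hx
        have hTadj : T.Adj (x : α) (u : α) := hadj
        have hu : ∃ j, ord (u : α) j = a := (hSmem u).mp u.2
        obtain ⟨h1, h2⟩ := hkey (x : α) (u : α) hTadj i a hx hu
        have hstep : ((T.deleteEdges (E i)).induce (Set.univ : Set α)).Adj
            ⟨(x : α), Set.mem_univ _⟩ ⟨(u : α), Set.mem_univ _⟩ := by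
          show (T.deleteEdges (E i)).Adj (x : α) (u : α)
          rw [SimpleGraph.deleteEdges_adj]
          exact ⟨hTadj, h2⟩
        obtain ⟨h3, h4⟩ := ih h1
        exact ⟨h3, hstep.reachable.trans h4⟩
    have hphi : Function.Injective
        (fun w : ↥{w | a ∈ ordColors ord w} => (⟨(w : α), Set.mem_univ _⟩ : ↥(Set.univ : Set α))) :=
      by
        intro s t h
        simp only [Subtype.mk.injEq] at h
        exact Subtype.ext h
    have himg : (fun w : ↥{w | a ∈ ordColors ord w} =>
          (⟨(w : α), Set.mem_univ _⟩ : ↥(Set.univ : Set α))) ''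
          ((T.induce {w | a ∈ ordColors ord w}).connectedComponentMk v).supp ⊆
        (((T.deleteEdges (E i)).induce (Set.univ : Set α)).connectedComponentMk
          ⟨(v : α), Set.mem_univ _⟩).supp := by
      rintro _ ⟨w, hw, rfl⟩
      rw [SimpleGraph.ConnectedComponent.mem_supp_iff, SimpleGraph.ConnectedComponent.eq] at hw ⊢
      obtain ⟨p⟩ := hw.symm
      exact ((hwalk v w p hi).2).symm
    calc ((T.induce {w | a ∈ ordColors ord w}).connectedComponentMk v).supp.ncard
        = ((fun w : ↥{w | a ∈ ordColors ord w} =>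
            (⟨(w : α), Set.mem_univ _⟩ : ↥(Set.univ : Set α))) ''
            ((T.induce {w | a ∈ ordColors ord w}).connectedComponentMk v).supp).ncard :=
          (Set.ncard_image_of_injective _ hphi).symm
      _ ≤ (((T.deleteEdges (E i)).induce (Set.univ : Set α)).connectedComponentMk
            ⟨(v : α), Set.mem_univ _⟩).supp.ncard := Set.ncard_le_ncard himg (Set.toFinite _)
      _ ≤ c := hcomp i ⟨(v : α), Set.mem_univ _⟩
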